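/- (Harrington; determinacy-free form) Let Γ be a reasonably closed Wadge class in the Cantor space 2^ω, and let A, B ⊆ 2^ω be such that A ≤_W B and Γ = B↓. Then there exists an injective continuous function f : 2^ω → 2^ω such that A = f⁻¹[B]. -/

import Mathlib

/-- The Cantor space `2^ω`. -/
abbrev CantorSp : Type := ℕ → Bool

/-- Wadge reducibility in the Cantor space: `A ≤_W B`. -/
def WadgeLe (A B : Set CantorSp) : Prop :=
  ∃ f : CantorSp → CantorSp, Continuous f ∧ A = f ⁻¹' B

/-- `A↓`, the collection of sets Wadge reducible to `A`. -/
def wadgeDown (A : Set CantorSp) : Set (Set CantorSp) :=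
  {B | WadgeLe B A}

/-- `Q i` is the set of sequences that are eventually equal to `i`.  Here `Q false`
plays the role of `Q₀` and `Q true` the role of `Q₁`. -/
def eventuallyConst (i : Bool) : Set CantorSp :=
  {x | ∀ᶠ n in Filter.atTop, x n = i}

/-- For `x ∉ Q₀ ∪ Q₁`, `zeroBlock x n = (s, e)` where `[s, e)` is the `n`-th maximal
block of zeros (i.e. `false`s) of `x`, counting from the `0`-th block. -/
noncomputable def zeroBlock (x : CantorSp) : ℕ → ℕ × ℕ
  | 0 =>
      let s := sInf {k | x k = false}
      (s, sInf {k | s ≤ k ∧ x k = true})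
  | n + 1 =>
      let s := sInf {k | (zeroBlock x n).2 < k ∧ x k = false}
      (s, sInf {k | s ≤ k ∧ x k = true})

/-- The map `φ`: `φ(x)(n) = 0` iff the `n`-th block of zeros of `x` has even length.
(Its values are only relevant on `2^ω ∖ (Q₀ ∪ Q₁)`.) -/
noncomputable def phiMap (x : CantorSp) (n : ℕ) : Bool :=
  decide (((zeroBlock x n).2 - (zeroBlock x n).1) % 2 = 1)

/-- A Wadge class `Γ` in `2^ω` is *reasonably closed* if `φ⁻¹[A] ∪ Q₀ ∈ Γ` for every
`A ∈ Γ`. -/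
def ReasonablyClosed (Γ : Set (Set CantorSp)) : Prop :=
  (∃ A : Set CantorSp, Γ = wadgeDown A) ∧
  ∀ A ∈ Γ,
    ({x | x ∉ eventuallyConst false ∧ x ∉ eventuallyConst true ∧ phiMap x ∈ A} ∪
      eventuallyConst false) ∈ Γ

lemma nat_sInf_eq {P : ℕ → Prop} {a : ℕ} (h1 : P a) (h2 : ∀ j < a, ¬ P j) :
    sInf {k | P k} = a :=
  le_antisymm (Nat.sInf_le h1)
    (le_of_not_gt fun h => h2 _ h (Nat.sInf_mem (⟨a, h1⟩ : Set.Nonempty {k | P k})))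

lemma zeroBlock_eq (y : CantorSp) (a e : ℕ → ℕ)
    (h0 : ∀ j < a 0, y j = true)
    (hgap : ∀ n, ∀ j, e n < j → j < a (n+1) → y j = true)
    (hlt : ∀ n, e n < a (n+1))
    (hblock : ∀ n, ∀ j, a n ≤ j → j < e n → y j = false)
    (hae : ∀ n, a n < e n)
    (hend : ∀ n, y (e n) = true) :
    ∀ n, zeroBlock y n = (a n, e n) := by
  intro n
  induction n with
  | zero =>
    have hs : sInf {k | y k = false} = a 0 :=
      nat_sInf_eq (hblock 0 _ le_rfl (hae 0))
        (fun j hj hyj => by simp [h0 j hj] at hyj)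
    have he : sInf {k | a 0 ≤ k ∧ y k = true} = e 0 :=
      nat_sInf_eq ⟨(hae 0).le, hend 0⟩
        (fun j hj hP => by
          rcases lt_or_ge j (a 0) with h | h
          · omega
          · rw [hblock 0 j h hj] at hP; exact absurd hP.2 (by simp))
    simp only [zeroBlock, hs, he]
  | succ n ih =>
    have hs : sInf {k | (zeroBlock y n).2 < k ∧ y k = false} = a (n+1) := by
      rw [ih]
      exact nat_sInf_eq ⟨hlt n, hblock (n+1) _ le_rfl (hae (n+1))⟩
        (fun j hj hP => by
          have := hgap n j hP.1 hj
          rw [this] at hP; exact absurd hP.2 (by simp))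
    have he : sInf {k | a (n+1) ≤ k ∧ y k = true} = e (n+1) :=
      nat_sInf_eq ⟨(hae (n+1)).le, hend (n+1)⟩
        (fun j hj hP => by
          rcases lt_or_ge j (a (n+1)) with h | h
          · omega
          · rw [hblock (n+1) j h hj] at hP; exact absurd hP.2 (by simp))
    simp only [zeroBlock, hs, he]

lemma cylinder_isOpen (u : CantorSp) (n : ℕ) :
    IsOpen {w : CantorSp | ∀ i < n, w i = u i} := by
  have h : {w : CantorSp | ∀ i < n, w i = u i} =
      ⋂ i ∈ Finset.range n, {w : CantorSp | w i = u i} := by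
    ext w; simp [Finset.mem_range]
  rw [h]
  refine isOpen_biInter_finset fun i _ => ?_
  have : {w : CantorSp | w i = u i} = (fun w : CantorSp => w i) ⁻¹' {u i} := rfl
  rw [this]
  exact (continuous_apply i).isOpen_preimage _ (isOpen_discrete _)

lemma exists_cyl {g : CantorSp → CantorSp} (hg : Continuous g) (u : CantorSp) (m : ℕ) :
    ∃ N, ∀ w : CantorSp, (∀ j < N, w j = u j) → g w m = g u m := by
  have hopen : IsOpen {w : CantorSp | g w m = g u m} := by
    have : {w : CantorSp | g w m = g u m} = (fun w => g w m) ⁻¹' {g u m} := rfl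
    rw [this]
    exact ((continuous_apply m).comp hg).isOpen_preimage _ (isOpen_discrete _)
  have hmem : {w : CantorSp | g w m = g u m} ∈ nhds u := hopen.mem_nhds rfl
  rw [nhds_pi] at hmem
  have : (fun i : ℕ => nhds (u i)) = fun i => pure (u i) := by
    funext i; rw [nhds_discrete]
  rw [this] at hmem
  obtain ⟨I, hIfin, t, ht, hsub⟩ := Filter.mem_pi.mp hmem
  obtain ⟨b, hb⟩ := hIfin.bddAbove
  refine ⟨b + 1, fun w hw => hsub fun i hi => ?_⟩
  rw [hw i (Nat.lt_succ_of_le (hb hi))]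
  exact ht i

lemma continuous_of_dep {F : CantorSp → Bool} {n : ℕ}
    (h : ∀ x y : CantorSp, (∀ i < n, x i = y i) → F x = F y) : Continuous F := by
  have : IsLocallyConstant F := by
    intro s
    rw [isOpen_iff_forall_mem_open]
    intro x hx
    exact ⟨{w | ∀ i < n, w i = x i}, fun w hw => by
      have := h w x hw; simp only [Set.mem_preimage] at hx ⊢; rw [this]; exact hx,
      cylinder_isOpen x n, fun i _ => rfl⟩
  exact this.continuous

def strToFun (t : List Bool) (b : Bool) : CantorSp := fun j => t.getD j b

def goodPair (g : CantorSp → CantorSp) (t : List Bool) (m k : ℕ) : Prop :=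
  (∀ w : CantorSp, (∀ j < t.length + k, w j = strToFun t false j) →
      g w m = g (strToFun t false) m) ∧
  (∀ w : CantorSp, (∀ j < t.length + k, w j = strToFun t true j) →
      g w m = g (strToFun t true) m) ∧
  g (strToFun t false) m ≠ g (strToFun t true) m

lemma exists_goodPair {g : CantorSp → CantorSp} (hg : Continuous g) {B : Set CantorSp}
    (H : ∀ t : List Bool, g (strToFun t false) ∈ B ∧ g (strToFun t true) ∉ B)
    (t : List Bool) : ∃ p : ℕ × ℕ, goodPair g t p.1 p.2 := by
  have hne : g (strToFun t false) ≠ g (strToFun t true) :=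
    fun h => (H t).2 (h ▸ (H t).1)
  obtain ⟨m, hm⟩ := Function.ne_iff.mp hne
  obtain ⟨N₀, h₀⟩ := exists_cyl hg (strToFun t false) m
  obtain ⟨N₁, h₁⟩ := exists_cyl hg (strToFun t true) m
  exact ⟨(m, N₀ + N₁),
    fun w hw => h₀ w (fun j hj => hw j (by omega)),
    fun w hw => h₁ w (fun j hj => hw j (by omega)), hm⟩

open Classical in
noncomputable def MK (g : CantorSp → CantorSp) (t : List Bool) : ℕ × ℕ :=
  if h : ∃ p : ℕ × ℕ, goodPair g t p.1 p.2 then h.choose else (0, 0)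

lemma MK_spec {g : CantorSp → CantorSp} {B : Set CantorSp} (hg : Continuous g)
    (H : ∀ t : List Bool, g (strToFun t false) ∈ B ∧ g (strToFun t true) ∉ B)
    (t : List Bool) : goodPair g t (MK g t).1 (MK g t).2 := by
  have h := exists_goodPair hg H t
  rw [MK]
  rw [dif_pos h]
  exact h.choose_spec

noncomputable def extStr (g : CantorSp → CantorSp) (t : List Bool) (b : Bool) : List Bool :=
  if b then t ++ (List.replicate (2 * (MK g t).2 + 1) false ++ [true])
  else t ++ (List.replicate (MK g t).2 true ++ [false, false, true])

noncomputable def seqStr (g : CantorSp → CantorSp) (x : CantorSp) : ℕ → List Bool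
  | 0 => [true]
  | n + 1 => extStr g (seqStr g x n) (x n)

noncomputable def psiFun (g : CantorSp → CantorSp) (x : CantorSp) : CantorSp :=
  fun j => (seqStr g x (j + 1)).getD j false

noncomputable def aFun (g : CantorSp → CantorSp) (x : CantorSp) (n : ℕ) : ℕ :=
  (seqStr g x n).length + (if x n then 0 else (MK g (seqStr g x n)).2)

noncomputable def eFun (g : CantorSp → CantorSp) (x : CantorSp) (n : ℕ) : ℕ :=
  aFun g x n + (if x n then 2 * (MK g (seqStr g x n)).2 + 1 else 2)

lemma seq_len_succ (g : CantorSp → CantorSp) (x : CantorSp) (n : ℕ) :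
    (seqStr g x (n + 1)).length = eFun g x n + 1 := by
  show (extStr g (seqStr g x n) (x n)).length = _
  rw [extStr, eFun, aFun]
  cases hx : x n <;> simp [hx] <;> omega

lemma seq_len_ge (g : CantorSp → CantorSp) (x : CantorSp) (n : ℕ) :
    n + 1 ≤ (seqStr g x n).length := by
  induction n with
  | zero => simp [seqStr]
  | succ n ih =>
    rw [seq_len_succ, eFun, aFun]
    cases hx : x n <;> simp [hx] <;> omega

lemma seq_prefix (g : CantorSp → CantorSp) (x : CantorSp) (n : ℕ) :
    seqStr g x n <+: seqStr g x (n + 1) := by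
  show seqStr g x n <+: extStr g (seqStr g x n) (x n)
  rw [extStr]
  split <;> exact List.prefix_append _ _

lemma seq_prefix_le (g : CantorSp → CantorSp) (x : CantorSp) {m n : ℕ} (h : m ≤ n) :
    seqStr g x m <+: seqStr g x n := by
  induction n with
  | zero => rw [Nat.le_zero.mp h]
  | succ n ih =>
    rcases Nat.lt_succ_iff_lt_or_eq.mp (Nat.lt_succ_of_le h) with h' | h'
    · exact (ih (Nat.lt_succ_iff.mp h')).trans (seq_prefix g x n)
    · rw [h']

lemma getD_prefix {l₁ l₂ : List Bool} (h : l₁ <+: l₂) {j : ℕ} (hj : j < l₁.length) (d : Bool) :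
    l₂.getD j d = l₁.getD j d := by
  rw [List.getD_eq_getElem l₁ d hj, List.getD_eq_getElem l₂ d (lt_of_lt_of_le hj h.length_le),
    h.getElem hj]

lemma psi_eq_of_lt_len (g : CantorSp → CantorSp) (x : CantorSp) {n j : ℕ}
    (hj : j < (seqStr g x n).length) :
    psiFun g x j = (seqStr g x n).getD j false := by
  rcases le_total (j + 1) n with h | h
  · exact (getD_prefix (seq_prefix_le g x h)
      (lt_of_lt_of_le (by omega : j < j + 1 + 1) (seq_len_ge g x (j + 1))) false).symm
  · exact getD_prefix (seq_prefix_le g x h) hj false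

lemma e_lt_len (g : CantorSp → CantorSp) (x : CantorSp) (n : ℕ) :
    eFun g x n < (seqStr g x (n + 1)).length := by rw [seq_len_succ]; omega

lemma a_lt_e (g : CantorSp → CantorSp) (x : CantorSp) (n : ℕ) :
    aFun g x n < eFun g x n := by
  rw [eFun]; cases hx : x n <;> simp [hx]

lemma len_le_a (g : CantorSp → CantorSp) (x : CantorSp) (n : ℕ) :
    (seqStr g x n).length ≤ aFun g x n := by
  rw [aFun]; omega

lemma psi_block (g : CantorSp → CantorSp) (x : CantorSp) (n : ℕ) {j : ℕ}
    (h₁ : aFun g x n ≤ j) (h₂ : j < eFun g x n) : psiFun g x j = false := by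
  have hlen : j < (seqStr g x (n + 1)).length := lt_trans h₂ (e_lt_len g x n)
  rw [psi_eq_of_lt_len g x hlen]
  show (extStr g (seqStr g x n) (x n)).getD j false = false
  rw [extStr]
  set t := seqStr g x n with ht
  set k := (MK g t).2 with hk
  rw [aFun, ← ht, ← hk] at h₁
  rw [eFun, aFun, ← ht, ← hk] at h₂
  cases hx : x n
  · rw [hx] at h₁ h₂; simp only [if_neg Bool.false_ne_true] at h₁ h₂ ⊢
    rw [List.getD_append_right _ _ _ _ (by omega),
        List.getD_append_right _ _ _ _ (by simp; omega)]
    have : j - t.length - (List.replicate k true).length = 0 ∨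
           j - t.length - (List.replicate k true).length = 1 := by simp; omega
    rcases this with h | h <;> rw [h] <;> rfl
  · rw [hx] at h₁ h₂; simp only [if_pos] at h₁ h₂ ⊢
    rw [List.getD_append_right _ _ _ _ (by omega),
        List.getD_append _ _ _ _ (by simp; omega)]
    rw [List.getD_eq_getElem _ _ (by simp; omega), List.getElem_replicate]

lemma psi_end (g : CantorSp → CantorSp) (x : CantorSp) (n : ℕ) :
    psiFun g x (eFun g x n) = true := by
  rw [psi_eq_of_lt_len g x (e_lt_len g x n)]
  show (extStr g (seqStr g x n) (x n)).getD _ false = true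
  rw [extStr]
  set t := seqStr g x n with ht
  set k := (MK g t).2 with hk
  have he : eFun g x n = t.length + (if x n then 2 * k + 1 else k + 2) := by
    rw [eFun, aFun, ← ht, ← hk]; cases x n <;> simp <;> omega
  cases hx : x n
  · rw [hx] at he; simp only [if_neg Bool.false_ne_true] at he ⊢
    rw [he, List.getD_append_right _ _ _ _ (by omega),
        List.getD_append_right _ _ _ _ (by simp)]
    have : t.length + (k + 2) - t.length - (List.replicate k true).length = 2 := by simp
    rw [this]; rfl
  · rw [hx] at he; simp only [eq_self_iff_true, if_true] at he ⊢
    rw [he, List.getD_append_right _ _ _ _ (by omega),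
        List.getD_append_right _ _ _ _ (by simp)]
    have : t.length + (2 * k + 1) - t.length - (List.replicate (2 * k + 1) false).length = 0 := by
      simp
    rw [this]; rfl

lemma psi_pregap (g : CantorSp → CantorSp) (x : CantorSp) (n : ℕ) {j : ℕ}
    (h₁ : (seqStr g x n).length ≤ j) (h₂ : j < aFun g x n) : psiFun g x j = true := by
  have hlen : j < (seqStr g x (n + 1)).length :=
    lt_trans (lt_trans h₂ (a_lt_e g x n)) (e_lt_len g x n)
  rw [psi_eq_of_lt_len g x hlen]
  show (extStr g (seqStr g x n) (x n)).getD j false = true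
  rw [extStr]
  set t := seqStr g x n with ht
  set k := (MK g t).2 with hk
  rw [aFun, ← ht, ← hk] at h₂
  cases hx : x n
  · rw [hx] at h₂; simp only [if_neg Bool.false_ne_true] at h₂ ⊢
    rw [List.getD_append_right _ _ _ _ h₁,
        List.getD_append _ _ _ _ (by simp; omega)]
    rw [List.getD_eq_getElem _ _ (by simp; omega), List.getElem_replicate]
  · rw [hx] at h₂; simp at h₂; omega

lemma psi_init (g : CantorSp → CantorSp) (x : CantorSp) {j : ℕ}
    (h : j < aFun g x 0) : psiFun g x j = true := by
  rcases Nat.lt_or_ge j 1 with h1 | h1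
  · have h0 : j = 0 := by omega
    subst h0
    rw [psi_eq_of_lt_len g x (n := 0) (by simp [seqStr])]
    rfl
  · exact psi_pregap g x 0 (by simpa [seqStr] using h1) h

lemma psi_gap (g : CantorSp → CantorSp) (x : CantorSp) (n : ℕ) {j : ℕ}
    (h₁ : eFun g x n < j) (h₂ : j < aFun g x (n + 1)) : psiFun g x j = true :=
  psi_pregap g x (n + 1) (by rw [seq_len_succ]; omega) h₂

lemma e_lt_a_succ (g : CantorSp → CantorSp) (x : CantorSp) (n : ℕ) :
    eFun g x n < aFun g x (n + 1) := by
  have h1 := seq_len_succ g x n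
  have h2 := len_le_a g x (n + 1)
  omega



lemma zeroBlock_psi (g : CantorSp → CantorSp) (x : CantorSp) (n : ℕ) :
    zeroBlock (psiFun g x) n = (aFun g x n, eFun g x n) :=
  zeroBlock_eq (psiFun g x) (aFun g x) (eFun g x)
    (fun _ hj => psi_init g x hj)
    (fun n _ h1 h2 => psi_gap g x n h1 h2)
    (e_lt_a_succ g x)
    (fun n _ h1 h2 => psi_block g x n h1 h2)
    (a_lt_e g x)
    (psi_end g x) n

lemma phi_psi (g : CantorSp → CantorSp) (x : CantorSp) : phiMap (psiFun g x) = x := by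
  funext n
  rw [phiMap, zeroBlock_psi]
  simp only
  have ha := a_lt_e g x n
  cases hx : x n
  · have : eFun g x n - aFun g x n = 2 := by rw [eFun, hx]; simp
    rw [this]; rfl
  · have : eFun g x n - aFun g x n = 2 * (MK g (seqStr g x n)).2 + 1 := by
      rw [eFun, hx]; simp
    rw [this]
    have : (2 * (MK g (seqStr g x n)).2 + 1) % 2 = 1 := by omega
    simp [this]

lemma e_ge (g : CantorSp → CantorSp) (x : CantorSp) (n : ℕ) : n ≤ eFun g x n := by
  have h1 := seq_len_succ g x n
  have h2 := seq_len_ge g x (n + 1)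
  omega

lemma a_ge (g : CantorSp → CantorSp) (x : CantorSp) (n : ℕ) : n ≤ aFun g x n := by
  have h1 := seq_len_ge g x n
  have h2 := len_le_a g x n
  omega

lemma psi_not_evFalse (g : CantorSp → CantorSp) (x : CantorSp) :
    psiFun g x ∉ eventuallyConst false := by
  intro h
  obtain ⟨N, hN⟩ := Filter.eventually_atTop.mp h
  have := hN (eFun g x N) (le_trans (e_ge g x N) le_rfl)
  rw [psi_end] at this
  exact absurd this (by simp)

lemma psi_not_evTrue (g : CantorSp → CantorSp) (x : CantorSp) :
    psiFun g x ∉ eventuallyConst true := by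
  intro h
  obtain ⟨N, hN⟩ := Filter.eventually_atTop.mp h
  have := hN (aFun g x N) (a_ge g x N)
  rw [psi_block g x N le_rfl (a_lt_e g x N)] at this
  exact absurd this (by simp)

lemma seq_agree (g : CantorSp → CantorSp) {x y : CantorSp} (n : ℕ)
    (h : ∀ i < n, x i = y i) : seqStr g x n = seqStr g y n := by
  induction n with
  | zero => rfl
  | succ n ih =>
    show extStr g (seqStr g x n) (x n) = extStr g (seqStr g y n) (y n)
    rw [ih (fun i hi => h i (Nat.lt_succ_of_lt hi)), h n (Nat.lt_succ_self n)]

lemma psi_continuous (g : CantorSp → CantorSp) : Continuous (psiFun g) := by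
  apply continuous_pi
  intro j
  exact continuous_of_dep (n := j + 1) fun x y h => by
    show (seqStr g x (j + 1)).getD j false = (seqStr g y (j + 1)).getD j false
    rw [seq_agree g (j + 1) h]

lemma inj_step {g : CantorSp → CantorSp} {B : Set CantorSp} (hg : Continuous g)
    (H : ∀ t : List Bool, g (strToFun t false) ∈ B ∧ g (strToFun t true) ∉ B)
    {x y : CantorSp} {n : ℕ} (hpre : ∀ i < n, x i = y i)
    (hx : x n = true) (hy : y n = false) :
    g (psiFun g x) ≠ g (psiFun g y) := by
  set t := seqStr g x n with ht
  have hty : seqStr g y n = t := (seq_agree g n hpre).symm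
  obtain ⟨h₀, h₁, hne⟩ := MK_spec hg H t
  set m := (MK g t).1
  set k := (MK g t).2
  have hax : aFun g x n = t.length := by rw [aFun, ← ht, hx]; simp
  have hex : t.length + k ≤ eFun g x n := by
    rw [eFun, hax, hx, ← ht]; simp; omega
  have hay : aFun g y n = t.length + k := by rw [aFun, hty, hy]; simp; rfl
  have hxw : g (psiFun g x) m = g (strToFun t false) m := by
    apply h₀
    intro j hj
    rcases lt_or_ge j t.length with hjt | hjt
    · rw [psi_eq_of_lt_len g x (n := n) (by rw [← ht]; exact hjt)]
      rfl
    · rw [psi_block g x n (by omega) (by omega)]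
      rw [strToFun, List.getD_eq_default _ _ hjt]
  have hyw : g (psiFun g y) m = g (strToFun t true) m := by
    apply h₁
    intro j hj
    rcases lt_or_ge j t.length with hjt | hjt
    · rw [psi_eq_of_lt_len g y (n := n) (by rw [hty]; exact hjt)]
      rw [hty, strToFun, List.getD_eq_getElem _ _ hjt, List.getD_eq_getElem _ _ hjt]
    · rw [psi_pregap g y n (by rw [hty]; omega) (by omega)]
      rw [strToFun, List.getD_eq_default _ _ hjt]
  intro hcontra
  rw [← hxw, ← hyw, hcontra] at hne
  exact hne rfl

theorem stmt15 (Γ : Set (Set CantorSp)) (hΓ : ReasonablyClosed Γ)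
    (A B : Set CantorSp) (hAB : WadgeLe A B) (hB : Γ = wadgeDown B) :
    ∃ f : CantorSp → CantorSp, Function.Injective f ∧ Continuous f ∧ A = f ⁻¹' B := by
  have hA : A ∈ Γ := by rw [hB]; exact hAB
  have hC : ({x | x ∉ eventuallyConst false ∧ x ∉ eventuallyConst true ∧ phiMap x ∈ A} ∪
      eventuallyConst false) ∈ Γ := hΓ.2 A hA
  rw [hB] at hC
  obtain ⟨g, hg, hCg⟩ := hC
  set C : Set CantorSp :=
    {x | x ∉ eventuallyConst false ∧ x ∉ eventuallyConst true ∧ phiMap x ∈ A} ∪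
      eventuallyConst false with hCdef
  have huC : ∀ t : List Bool, strToFun t false ∈ C := by
    intro t
    right
    refine Filter.eventually_atTop.mpr ⟨t.length, fun n hn => ?_⟩
    exact List.getD_eq_default _ _ hn
  have hvT : ∀ t : List Bool, strToFun t true ∈ eventuallyConst true := by
    intro t
    refine Filter.eventually_atTop.mpr ⟨t.length, fun n hn => ?_⟩
    exact List.getD_eq_default _ _ hn
  have hvC : ∀ t : List Bool, strToFun t true ∉ C := by
    intro t hmem
    rcases hmem with ⟨_, h2, _⟩ | h
    · exact h2 (hvT t)
    · obtain ⟨n, hn1, hn2⟩ := (h.and (hvT t)).exists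
      rw [hn1] at hn2
      exact absurd hn2 (by simp)
  have H : ∀ t : List Bool, g (strToFun t false) ∈ B ∧ g (strToFun t true) ∉ B := by
    intro t
    constructor
    · have := huC t; rw [hCg] at this; exact this
    · intro hmem
      exact hvC t (by rw [hCg]; exact hmem)
  refine ⟨g ∘ psiFun g, ?_, hg.comp (psi_continuous g), ?_⟩
  · intro x y hxy
    by_contra hne
    have hex : ∃ n, x n ≠ y n := by
      by_contra hall
      push_neg at hall
      exact hne (funext hall)
    set n := Nat.find hex with hn
    have hdiff : x n ≠ y n := Nat.find_spec hex
    have hpre : ∀ i < n, x i = y i := fun i hi => by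
      by_contra hc
      exact absurd hi (Nat.not_lt.mpr (Nat.find_le hc))
    have hxy' : g (psiFun g x) = g (psiFun g y) := hxy
    cases hxb : x n <;> cases hyb : y n
    · exact hdiff (hxb.trans hyb.symm)
    · exact inj_step hg H (fun i hi => (hpre i hi).symm) hyb hxb hxy'.symm
    · exact inj_step hg H hpre hxb hyb hxy'
    · exact hdiff (hxb.trans hyb.symm)
  · ext x
    simp only [Set.mem_preimage, Function.comp_apply]
    have hmemiff : psiFun g x ∈ C ↔ g (psiFun g x) ∈ B := by rw [hCg]; exact Iff.rfl
    rw [← hmemiff]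
    constructor
    · intro hx
      left
      exact ⟨psi_not_evFalse g x, psi_not_evTrue g x, by rw [phi_psi]; exact hx⟩
    · intro hx
      rcases hx with ⟨_, _, h3⟩ | h
      · rwa [phi_psi] at h3
      · exact absurd h (psi_not_evFalse g x)
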